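/- arXiv:1210.6378 — 3 statements merged into one kernel-verified Lean document; each statement's English description precedes it below -/
import Mathlib

section
/- Let M, N, P be positive integers, L₁ = min(M+1, N) and L₂ = max(M+1, N). Define T_P = 4·∑_{k=1}^{L₁}(⌊(k-1)/P⌋ + 1) + 2·(L₂ - L₁ - 1)·(⌊(L₁-1)/P⌋ + 1) (assuming L₂ ≥ L₁ + 1). Then T_P = 2(L₁ + L₂ - 1) + 2·⌊(L₁-1)/P⌋·(L₁ + L₂ - 1 - P - P·⌊(L₁-1)/P⌋). -/
lemma key_sum (P : ℕ) (hP : 1 ≤ P) (n : ℕ) (hn : 1 ≤ n) :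
    2 * (∑ k ∈ Finset.Icc 1 n, ((((k - 1) / P : ℕ) : ℤ))) =
      2 * (((n - 1) / P : ℕ) : ℤ) * n -
        P * (((n - 1) / P : ℕ) : ℤ) * ((((n - 1) / P : ℕ) : ℤ) + 1) := by
  induction n, hn using Nat.le_induction with
  | base => norm_num [Nat.div_eq_of_lt hP]
  | succ m hm ih =>
    rw [Finset.sum_Icc_succ_top (by omega : 1 ≤ m + 1)]
    set q := (m - 1) / P with hq
    set r := (m - 1) % P with hr
    have hdm : P * q + r = m - 1 := Nat.div_add_mod (m - 1) P
    have hrP : r < P := Nat.mod_lt _ (by omega)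
    have hsucc : m + 1 - 1 = m := by omega
    rw [hsucc]
    by_cases hc : r + 1 < P
    · have hdiv : m / P = q := by
        have hme : m = P * q + (r + 1) := by omega
        rw [hme, Nat.mul_add_div (by omega), Nat.div_eq_of_lt hc, Nat.add_zero]
      rw [hdiv, Nat.cast_add, Nat.cast_one]
      linear_combination ih
    · have hr1 : r + 1 = P := by omega
      have hmval : m = P * (q + 1) := by
        have : P * (q + 1) = P * q + P := by ring
        omega
      have hdiv : m / P = q + 1 := by
        rw [hmval, Nat.mul_div_cancel_left _ (by omega)]
      rw [hdiv]
      have hmc : (m : ℤ) = P * (q + 1) := by exact_mod_cast congrArg Nat.cast hmval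
      simp only [Nat.cast_add, Nat.cast_one]
      linear_combination ih - 2 * hmc

theorem stmt_1 (M N P : ℕ) (hM : 1 ≤ M) (hN : 1 ≤ N) (hP : 1 ≤ P)
    (L₁ L₂ : ℕ) (hL₁ : L₁ = min (M + 1) N) (hL₂ : L₂ = max (M + 1) N)
    (h : L₁ + 1 ≤ L₂) :
    (4 * ∑ k ∈ Finset.Icc 1 L₁, ((((k - 1) / P : ℕ) : ℤ) + 1)) +
        2 * ((L₂ : ℤ) - L₁ - 1) * ((((L₁ - 1) / P : ℕ) : ℤ) + 1) =
      2 * ((L₁ : ℤ) + L₂ - 1) +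
        2 * (((L₁ - 1) / P : ℕ) : ℤ) *
          ((L₁ : ℤ) + L₂ - 1 - P - P * (((L₁ - 1) / P : ℕ) : ℤ)) := by
  have hL1 : 1 ≤ L₁ := by omega
  have hS := key_sum P hP L₁ hL1
  rw [Finset.sum_add_distrib, Finset.sum_const, Nat.card_Icc]
  have hcard : L₁ + 1 - 1 = L₁ := by omega
  rw [hcard, nsmul_eq_mul, mul_one]
  linear_combination 2 * hS
end

section
/- Let M, N ≥ 1 and define the in-place update: start with d_{-1} = d_0 = ... = d_{min(M+1,N)} = 0 (indexed appropriately), and for k = 1,...,M+N, for j from max(1,k-M) up to min(k,N) in increasing order, set d_{k-j} ← max(d_{k-j-1}, d_{k-j}) + τ_{k-j,j}. Then after all iterations, d_i = D_{i,N} for every 0 ≤ i ≤ M, where D is defined by D_{i,0}=0, D_{-1,j}=0, D_{i,j} = max(D_{i-1,j}, D_{i,j-1}) + τ_{i,j}. -/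
private def Pinv (M N : ℕ) (D : ℕ → ℕ → ℝ) (k : ℕ) (d : ℕ → ℝ) : Prop :=
  d 0 = 0 ∧ ∀ i ≤ M, d (i + 1) = D i (min (k - i) N)

private def Qinv (M N : ℕ) (D : ℕ → ℕ → ℝ) (k c : ℕ) (d : ℕ → ℝ) : Prop :=
  d 0 = 0 ∧ ∀ i ≤ M, d (i + 1) =
    if k < c + i then D i (min (k - i) N) else D i (min (k - 1 - i) N)

private lemma inner_lemma (M N : ℕ) (τ D : ℕ → ℕ → ℝ)
    (hrec : ∀ i j : ℕ, i ≤ M → 1 ≤ j →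
      D i j = max (if i = 0 then (0 : ℝ) else D (i - 1) j) (D i (j - 1)) + τ i j)
    (k : ℕ) :
    ∀ len c d, 1 ≤ c → k ≤ M + c → c + len = min k N + 1 →
      Qinv M N D k c d →
      Qinv M N D k (c + len)
        ((List.range' c len).foldl
          (fun d j => Function.update d (k - j + 1)
            (max (d (k - j)) (d (k - j + 1)) + τ (k - j) j)) d) := by
  intro len
  induction len with
  | zero => intro c d _ _ _ h; simpa using h
  | succ n ih =>
    intro c d hc1 hcM hlen hQ
    rw [List.range'_succ]
    simp only [List.foldl_cons]
    have hcmin : c ≤ min k N := by omega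
    have hck : c ≤ k := by omega
    have hcN : c ≤ N := by omega
    obtain ⟨h0, hI⟩ := hQ
    have hstep : Qinv M N D k (c + 1)
        (Function.update d (k - c + 1)
          (max (d (k - c)) (d (k - c + 1)) + τ (k - c) c)) := by
      constructor
      · rw [Function.update_apply, if_neg (by omega)]; exact h0
      · intro i hi
        rw [Function.update_apply]
        by_cases hic : i = k - c
        · rw [if_pos (by omega)]
          subst hic
          have hiM : k - c ≤ M := by omega
          -- value of d (k - c + 1)
          have hv1 : d (k - c + 1) = D (k - c) (c - 1) := by
            rw [hI (k - c) hiM, if_neg (by omega)]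
            congr 1; omega
          -- value of d (k - c)
          have hv0 : d (k - c) = if k - c = 0 then (0 : ℝ) else D (k - c - 1) c := by
            by_cases h00 : k - c = 0
            · rw [h00, if_pos rfl]; exact h0
            · rw [if_neg h00]
              have : k - c = (k - c - 1) + 1 := by omega
              rw [this] at *
              rw [hI (k - c - 1) (by omega), if_neg (by omega)]
              congr 1; omega
          rw [if_pos (by omega), hv0, hv1,
            show (k - (k - c)) ⊓ N = c from by omega,
            hrec (k - c) c hiM hc1]
        · rw [if_neg (by omega), hI i hi]
          by_cases hcond : k < c + i
          · rw [if_pos hcond, if_pos (by omega)]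
          · rw [if_neg hcond, if_neg (by omega)]
    have e : c + (n + 1) = (c + 1) + n := by omega
    rw [e]
    exact ih (c + 1) _ (by omega) (by omega) (by omega) hstep

private lemma outer_lemma (M N : ℕ) (τ D : ℕ → ℕ → ℝ)
    (hrec : ∀ i j : ℕ, i ≤ M → 1 ≤ j →
      D i j = max (if i = 0 then (0 : ℝ) else D (i - 1) j) (D i (j - 1)) + τ i j) :
    ∀ m k d, k + m = M + N → Pinv M N D k d →
      Pinv M N D (k + m)
        ((List.range' (k + 1) m).foldl
          (fun d k =>
            (List.range' (max 1 (k - M)) (min k N + 1 - max 1 (k - M))).foldl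
              (fun d j =>
                Function.update d (k - j + 1)
                  (max (d (k - j)) (d (k - j + 1)) + τ (k - j) j))
              d) d) := by
  intro m
  induction m with
  | zero => intro k d _ h; simpa using h
  | succ n ih =>
    intro k d hkm hP
    rw [List.range'_succ]
    simp only [List.foldl_cons]
    set a := max 1 (k + 1 - M) with ha
    have ha1 : 1 ≤ a := le_max_left _ _
    have hkMN : k + 1 ≤ M + N := by omega
    have haM : k + 1 ≤ M + a := by omega
    have halen : a + (min (k + 1) N + 1 - a) = min (k + 1) N + 1 := by omega
    obtain ⟨h0, hI⟩ := hP
    have hQ : Qinv M N D (k + 1) a d := by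
      refine ⟨h0, fun i hi => ?_⟩
      rw [hI i hi]
      by_cases hcond : k + 1 < a + i
      · rw [if_pos hcond, show k + 1 - i = k - i from by omega]
      · rw [if_neg hcond, show k + 1 - 1 - i = k - i from by omega]
    have hres := inner_lemma M N τ D hrec (k + 1) (min (k + 1) N + 1 - a) a d
      ha1 haM halen hQ
    rw [halen] at hres
    obtain ⟨h0', hI'⟩ := hres
    have hP' : Pinv M N D (k + 1)
        ((List.range' a (min (k + 1) N + 1 - a)).foldl
          (fun d j => Function.update d (k + 1 - j + 1)
            (max (d (k + 1 - j)) (d (k + 1 - j + 1)) + τ (k + 1 - j) j)) d) := by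
      refine ⟨h0', fun i hi => ?_⟩
      rw [hI' i hi]
      by_cases hcond : k + 1 < min (k + 1) N + 1 + i
      · rw [if_pos hcond]
      · rw [if_neg hcond, show (k + 1 - 1 - i) ⊓ N = (k + 1 - i) ⊓ N from by omega]
    have e : k + (n + 1) = (k + 1) + n := by omega
    rw [e]
    exact ih (k + 1) _ (by omega) hP'

theorem stmt_11 (M N : ℕ) (hM : 1 ≤ M) (hN : 1 ≤ N) (τ D : ℕ → ℕ → ℝ)
    (hD0 : ∀ i, D i 0 = 0)
    (hrec : ∀ i j : ℕ, i ≤ M → 1 ≤ j →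
      D i j = max (if i = 0 then (0 : ℝ) else D (i - 1) j) (D i (j - 1)) + τ i j) :
    ∀ i : ℕ, i ≤ M →
      ((List.range' 1 (M + N)).foldl
          (fun d k =>
            (List.range' (max 1 (k - M)) (min k N + 1 - max 1 (k - M))).foldl
              (fun d j =>
                Function.update d (k - j + 1)
                  (max (d (k - j)) (d (k - j + 1)) + τ (k - j) j))
              d)
          (fun _ => (0 : ℝ))) (i + 1) = D i N := by
  intro i hi
  have hbase : Pinv M N D 0 (fun _ => (0 : ℝ)) := by
    refine ⟨rfl, fun i hi => ?_⟩
    simp [Nat.zero_sub, hD0]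
  have h := outer_lemma M N τ D hrec (M + N) 0 (fun _ => (0 : ℝ)) (by omega) hbase
  rw [Nat.zero_add] at h
  have := h.2 i hi
  rwa [show min (M + N - i) N = N from by omega] at this
end

section
/- Let M, N, P ≥ 1 with L₁ = min(M+1,N), L₂ = max(M+1,N), and T_P = 2(L₁+L₂-1) + 2⌊(L₁-1)/P⌋(L₁+L₂-1-P-P⌊(L₁-1)/P⌋). Then T_P ≥ 2(M+N), with equality if and only if P ≥ L₁. -/
theorem stmt_14 (M N P : ℕ) (hM : 1 ≤ M) (hN : 1 ≤ N) (hP : 1 ≤ P)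
    (L₁ L₂ : ℕ) (hL₁ : L₁ = min (M + 1) N) (hL₂ : L₂ = max (M + 1) N) :
    2 * ((L₁ : ℤ) + L₂ - 1) +
        2 * (((L₁ - 1) / P : ℕ) : ℤ) *
          ((L₁ : ℤ) + L₂ - 1 - P - P * (((L₁ - 1) / P : ℕ) : ℤ)) ≥
      2 * ((M : ℤ) + N) ∧
    (2 * ((L₁ : ℤ) + L₂ - 1) +
        2 * (((L₁ - 1) / P : ℕ) : ℤ) *
          ((L₁ : ℤ) + L₂ - 1 - P - P * (((L₁ - 1) / P : ℕ) : ℤ)) =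
      2 * ((M : ℤ) + N) ↔ L₁ ≤ P) := by
  have hsum : L₁ + L₂ = M + 1 + N := by omega
  have hle : L₁ ≤ L₂ := by omega
  have hL1pos : 1 ≤ L₁ := by omega
  set q : ℕ := (L₁ - 1) / P with hq
  have hPq : q * P ≤ L₁ - 1 := Nat.div_mul_le_self _ _
  rcases Nat.eq_zero_or_pos q with h0 | hpos
  · have hLP : L₁ ≤ P := by
      have := Nat.div_eq_zero_iff.mp h0
      omega
    have hsumZ : (L₁ : ℤ) + L₂ = (M : ℤ) + 1 + N := by exact_mod_cast hsum
    rw [h0]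
    push_cast
    exact ⟨by linarith, fun _ => hLP, fun _ => by linarith⟩
  · have hPle : P ≤ L₁ - 1 := by
      have := (Nat.one_le_div_iff (by omega : 0 < P)).mp hpos
      omega
    have hq1 : (1 : ℤ) ≤ (q : ℤ) := by exact_mod_cast hpos
    have hPqZ : (q : ℤ) * P ≤ (L₁ : ℤ) - 1 := by
      have : ((q * P : ℕ) : ℤ) ≤ ((L₁ - 1 : ℕ) : ℤ) := by exact_mod_cast hPq
      push_cast at this
      omega
    have hPleZ : (P : ℤ) ≤ (L₁ : ℤ) - 1 := by exact_mod_cast by omega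
    have hsumZ : (L₁ : ℤ) + L₂ = (M : ℤ) + 1 + N := by exact_mod_cast hsum
    have hleZ : (L₁ : ℤ) ≤ L₂ := by exact_mod_cast hle
    have hstrict : 2 * ((L₁ : ℤ) + L₂ - 1) +
        2 * (q : ℤ) * ((L₁ : ℤ) + L₂ - 1 - P - P * (q : ℤ)) >
        2 * ((M : ℤ) + N) := by
      nlinarith [hq1, hPqZ, hPleZ, hsumZ, hleZ]
    constructor
    · exact le_of_lt hstrict
    · constructor
      · intro h; exfalso; linarith
      · intro h; exfalso; omega
end
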